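/- arXiv:2306.16613 — 2 statements merged into one kernel-verified Lean document; each statement's English description precedes it below -/
import Mathlib

section
/- Let L ⊣ R be an adjoint pair of endofunctors of a category C, with (L, Δ, ϵ) a comonad structure on L and (R, μ, ι) the corresponding monad structure on R obtained by taking mates (μ is the mate of Δ, ι is the mate of ϵ). Then the cofree coalgebra functor F^L : C ⥤ C^L (x ↦ (L(x), Δ_x)) is heavily separable if and only if the free algebra functor F_R : C ⥤ C_R (x ↦ (R(x), μ_x)) is heavily separable. -/
open CategoryTheory

/-- A functor `F : C ⥤ D` is *heavily separable* if there is a natural transformation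
`P : Hom_D(F −, F −) ⟶ Hom_C(−, −)` of functors `Cᵒᵖ × C ⥤ Set` with `P (F.map f) = f`
which is compatible with composition. -/
def HeavilySeparable {C : Type*} [Category C] {D : Type*} [Category D] (F : C ⥤ D) : Prop :=
  ∃ P : ∀ a b : C, (F.obj a ⟶ F.obj b) → (a ⟶ b),
    (∀ (a' a b b' : C) (u : a' ⟶ a) (v : b ⟶ b') (h : F.obj a ⟶ F.obj b),
        P a' b' (F.map u ≫ h ≫ F.map v) = u ≫ P a b h ≫ v) ∧
    (∀ (a b : C) (f : a ⟶ b), P a b (F.map f) = f) ∧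
    (∀ (a b c : C) (f : F.obj a ⟶ F.obj b) (g : F.obj b ⟶ F.obj c),
        P a c (f ≫ g) = P a b f ≫ P b c g)

universe v u

namespace HeavySepAux

open Category

/-- Heavy separability transfers along a composition-compatible family of bijections of
hom-sets out of the two functors. -/
lemma heavilySeparable_of_equiv {C : Type*} [Category C] {D : Type*} [Category D]
    {D' : Type*} [Category D'] {F : C ⥤ D} {G : C ⥤ D'}
    (E : ∀ a b : C, (F.obj a ⟶ F.obj b) ≃ (G.obj a ⟶ G.obj b))
    (hmap : ∀ (a b : C) (f : a ⟶ b), E a b (F.map f) = G.map f)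
    (hcomp : ∀ (a b c : C) (f : F.obj a ⟶ F.obj b) (g : F.obj b ⟶ F.obj c),
        E a c (f ≫ g) = E a b f ≫ E b c g) :
    HeavilySeparable F → HeavilySeparable G := by
  rintro ⟨P, h1, h2, h3⟩
  have hsm : ∀ (a b : C) (f : a ⟶ b), (E a b).symm (G.map f) = F.map f := by
    intro a b f; rw [← hmap]; simp
  have hsc : ∀ (a b c : C) (g : G.obj a ⟶ G.obj b) (g' : G.obj b ⟶ G.obj c),
      (E a c).symm (g ≫ g') = (E a b).symm g ≫ (E b c).symm g' := by
    intro a b c g g'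
    apply (E a c).injective
    rw [Equiv.apply_symm_apply, hcomp, Equiv.apply_symm_apply, Equiv.apply_symm_apply]
  refine ⟨fun a b g => P a b ((E a b).symm g), ?_, ?_, ?_⟩
  · intro a' a b b' u v h
    dsimp only
    rw [hsc, hsc, hsm, hsm, h1]
  · intro a b f
    dsimp only
    rw [hsm, h2]
  · intro a b c f g
    dsimp only
    rw [hsc, h3]

variable {C : Type u} [Category.{v} C]
  {L : Comonad C} {R : CategoryTheory.Monad C} (adj : L.toFunctor ⊣ R.toFunctor)

/-- The hom-set bijection between cofree coalgebras and free algebras, obtained by composing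
the cofree adjunction, the given adjunction `L ⊣ R`, and the free adjunction. -/
def myE (a b : C) : (L.cofree.obj a ⟶ L.cofree.obj b) ≃ (R.free.obj a ⟶ R.free.obj b) :=
  ((L.adj.homEquiv (L.cofree.obj a) b).symm.trans (adj.homEquiv a b)).trans
    (R.adj.homEquiv a (R.free.obj b)).symm

lemma myE_f (a b : C) (f : L.cofree.obj a ⟶ L.cofree.obj b) :
    (myE adj a b f).f = R.map (adj.unit.app a ≫ R.map (f.f ≫ L.ε.app b)) ≫ R.μ.app b := by
  change ((R.adj.homEquiv a (R.free.obj b)).symm (adj.homEquiv a b ((L.adj.homEquiv (L.cofree.obj a) b).symm f))).f = _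
  erw [Adjunction.homEquiv_counit, Adjunction.homEquiv_counit, Adjunction.homEquiv_unit]
  erw [Comonad.adj_counit, Monad.adj_counit, Monad.Algebra.comp_f, Monad.free_map_f, Comonad.forget_map]
  rfl

lemma myround {a b : C} (f : L.cofree.obj a ⟶ L.cofree.obj b) :
    L.δ.app a ≫ L.map (f.f ≫ L.ε.app b) = f.f := by
  have h := f.h
  simp only [Comonad.cofree_obj_a] at h
  have key : ∀ g : L.obj a ⟶ L.obj b, L.δ.app a ≫ L.map g = g ≫ L.δ.app b →
      L.δ.app a ≫ L.map (g ≫ L.ε.app b) = g := by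
    intro g h
    rw [Functor.map_comp, reassoc_of% h]
    simp
  exact key f.f h

lemma kleisli (R : CategoryTheory.Monad C) {a b c : C} (p : a ⟶ R.obj b) (m : b ⟶ R.obj c) :
    R.map (p ≫ R.map m ≫ R.μ.app c) ≫ R.μ.app c
      = (R.map p ≫ R.μ.app b) ≫ R.map m ≫ R.μ.app c := by
  have h2 := R.μ.naturality m
  simp only [Functor.comp_map] at h2
  rw [Functor.map_comp, Functor.map_comp, assoc, assoc, R.assoc, reassoc_of% h2]
  simp

section
variable (hμ : R.μ = conjugateEquiv (adj.comp adj) adj L.δ)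
  (hη : R.η = conjugateEquiv (Adjunction.id (C := C)) adj L.ε)

include hη in
lemma fact1 (x : C) : R.η.app x = adj.unit.app x ≫ R.map (L.ε.app x) := by
  have := unit_conjugateEquiv (Adjunction.id (C := C)) adj L.ε x
  rw [hη]; simpa [Adjunction.id] using this

include hμ in
lemma fact2 (x : C) :
    adj.unit.app x ≫ R.map (adj.unit.app (L.obj x)) ≫ R.μ.app (L.obj (L.obj x)) =
      adj.unit.app x ≫ R.map (L.δ.app x) := by
  have := unit_conjugateEquiv (adj.comp adj) adj L.δ x
  rw [hμ]; simpa [Adjunction.comp] using this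

include hμ in
lemma claimA {a b c : C} (k : L.obj a ⟶ b) (k' : L.obj b ⟶ c) :
    adj.unit.app a ≫ R.map (L.δ.app a ≫ L.map k ≫ k') =
      (adj.unit.app a ≫ R.map k) ≫ R.map (adj.unit.app b ≫ R.map k') ≫ R.μ.app c := by
  simp only [Functor.map_comp, assoc]
  rw [← reassoc_of% (fact2 adj hμ a)]
  have h1 := R.μ.naturality (L.map k)
  have h2 := R.μ.naturality k'
  simp only [Functor.comp_map] at h1 h2
  rw [reassoc_of% h1.symm, ← h2]
  have h3 := adj.unit.naturality k
  simp only [Functor.comp_map, Functor.id_map] at h3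
  rw [← Functor.map_comp_assoc, ← Functor.map_comp_assoc, ← h3]
  simp

include hη in
lemma myE_map (a b : C) (u : a ⟶ b) :
    myE adj a b (L.cofree.map u) = R.free.map u := by
  ext
  rw [myE_f]
  simp only [Comonad.cofree_map_f, Monad.free_map_f]
  have h1 := L.ε.naturality u
  simp only [Functor.id_map] at h1
  have e : adj.unit.app a ≫ R.map (L.ε.app a ≫ u) = R.η.app a ≫ R.map u := by
    rw [Functor.map_comp, fact1 adj hη, assoc]
  erw [h1]
  rw [e, Functor.map_comp, assoc]
  have h2 := R.μ.naturality u
  simp only [Functor.comp_map] at h2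
  rw [h2, ← assoc, Monad.right_unit]
  simp
  rfl

include hμ in
lemma myE_comp (a b c : C) (f : L.cofree.obj a ⟶ L.cofree.obj b)
    (g : L.cofree.obj b ⟶ L.cofree.obj c) :
    myE adj a c (f ≫ g) = myE adj a b f ≫ myE adj b c g := by
  ext
  rw [Monad.Algebra.comp_f, myE_f, myE_f, myE_f]
  simp only [Comonad.Coalgebra.comp_f]
  have key : (f.f ≫ g.f) ≫ L.ε.app c
      = L.δ.app a ≫ L.map (f.f ≫ L.ε.app b) ≫ (g.f ≫ L.ε.app c) := by
    rw [reassoc_of% (myround f)]; simp; exact assoc _ _ _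
  erw [key]
  erw [claimA adj hμ]
  exact kleisli R _ _

end
end HeavySepAux

/-- Let `L ⊣ R` with `L` a comonad whose mate monad structure is carried by `R` (`μ` the
conjugate of `δ`, `η` the conjugate of `ε`). Then the cofree coalgebra functor `F^L` is
heavily separable iff the free algebra functor `F_R` is heavily separable. -/
theorem cofree_heavilySeparable_iff_free_heavilySeparable {C : Type u} [Category.{v} C]
    (L : Comonad C) (R : Monad C) (adj : L.toFunctor ⊣ R.toFunctor)
    (hμ : R.μ = conjugateEquiv (adj.comp adj) adj L.δ)
    (hη : R.η = conjugateEquiv (Adjunction.id (C := C)) adj L.ε) :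
    HeavilySeparable L.cofree ↔ HeavilySeparable R.free := by
  constructor
  · exact HeavySepAux.heavilySeparable_of_equiv (fun a b => HeavySepAux.myE adj a b)
      (HeavySepAux.myE_map adj hη) (HeavySepAux.myE_comp adj hμ)
  · refine HeavySepAux.heavilySeparable_of_equiv
      (fun a b => (HeavySepAux.myE adj a b).symm) ?_ ?_
    · intro a b f
      rw [← HeavySepAux.myE_map adj hη]; simp
    · intro a b c f g
      apply (HeavySepAux.myE adj a c).injective
      rw [Equiv.apply_symm_apply, HeavySepAux.myE_comp adj hμ,
        Equiv.apply_symm_apply, Equiv.apply_symm_apply]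
end

section
/- Let L ⊣ R be an adjoint pair of endofunctors of a category C, with (L, Δ, ϵ) a comonad structure on L and (R, μ, ι) the corresponding monad structure on R obtained by taking mates (μ is the mate of Δ, ι is the mate of ϵ). Let P ⊣ Q be an adjunction of endofunctors of C whose associated comonad equals (L, Δ, ϵ) and whose associated monad equals (R, μ, ι). Then Q is heavily separable if and only if P is heavily separable. -/
open CategoryTheory

universe v u

section Aux

variable {C : Type u} [Category.{v} C]

/-- Heavy separability expressed on the Kleisli homs of a monad. -/
def KSep (R : Monad C) : Prop :=
  ∃ s : ∀ a b : C, (a ⟶ R.obj b) → (a ⟶ b),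
    (∀ (a' a b b' : C) (u : a' ⟶ a) (v : b ⟶ b') (f : a ⟶ R.obj b),
        s a' b' (u ≫ f ≫ R.map v) = u ≫ s a b f ≫ v) ∧
    (∀ (a b : C) (f : a ⟶ b), s a b (f ≫ R.η.app b) = f) ∧
    (∀ (a b c : C) (f : a ⟶ R.obj b) (g : b ⟶ R.obj c),
        s a c (f ≫ R.map g ≫ R.μ.app c) = s a b f ≫ s b c g)

lemma heavilySeparable_iff_kSep (F : C ⥤ C) (R : Monad C)
    (e : ∀ a b : C, (F.obj a ⟶ F.obj b) ≃ (a ⟶ R.obj b))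
    (hnat : ∀ (a' a b b' : C) (u : a' ⟶ a) (v : b ⟶ b') (h : F.obj a ⟶ F.obj b),
        e a' b' (F.map u ≫ h ≫ F.map v) = u ≫ e a b h ≫ R.map v)
    (hu : ∀ (a b : C) (f : a ⟶ b), e a b (F.map f) = f ≫ R.η.app b)
    (hc : ∀ (a b c : C) (h : F.obj a ⟶ F.obj b) (h' : F.obj b ⟶ F.obj c),
        e a c (h ≫ h') = e a b h ≫ R.map (e b c h') ≫ R.μ.app c) :
    HeavilySeparable F ↔ KSep R := by
  constructor
  · rintro ⟨s, sn, su, sc⟩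
    refine ⟨fun a b f => s a b ((e a b).symm f), ?_, ?_, ?_⟩
    · intro a' a b b' u v f
      have h1 : (e a' b').symm (u ≫ f ≫ R.map v) = F.map u ≫ (e a b).symm f ≫ F.map v := by
        apply (e a' b').injective
        rw [Equiv.apply_symm_apply, hnat, Equiv.apply_symm_apply]
      show s a' b' ((e a' b').symm (u ≫ f ≫ R.map v)) = u ≫ s a b ((e a b).symm f) ≫ v
      rw [h1, sn]
    · intro a b f
      have h1 : (e a b).symm (f ≫ R.η.app b) = F.map f := by
        apply (e a b).injective
        rw [Equiv.apply_symm_apply, hu]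
      show s a b ((e a b).symm (f ≫ R.η.app b)) = f
      rw [h1, su]
    · intro a b c f g
      have h1 : (e a c).symm (f ≫ R.map g ≫ R.μ.app c) = (e a b).symm f ≫ (e b c).symm g := by
        apply (e a c).injective
        rw [Equiv.apply_symm_apply, hc, Equiv.apply_symm_apply, Equiv.apply_symm_apply]
      show s a c ((e a c).symm (f ≫ R.map g ≫ R.μ.app c))
        = s a b ((e a b).symm f) ≫ s b c ((e b c).symm g)
      rw [h1, sc]
  · rintro ⟨s, sn, su, sc⟩
    refine ⟨fun a b h => s a b (e a b h), ?_, ?_, ?_⟩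
    · intro a' a b b' u v h
      show s a' b' (e a' b' (F.map u ≫ h ≫ F.map v)) = u ≫ s a b (e a b h) ≫ v
      rw [hnat, sn]
    · intro a b f
      show s a b (e a b (F.map f)) = f
      rw [hu, su]
    · intro a b c h h'
      show s a c (e a c (h ≫ h')) = s a b (e a b h) ≫ s b c (e b c h')
      rw [hc, sc]

end Aux

/-- Let `L ⊣ R` with `L` a comonad whose mate monad structure is carried by `R`. If `P ⊣ Q`
is an adjunction of endofunctors of `C` with associated comonad `L` and associated monad `R`,
then `Q` is heavily separable iff `P` is heavily separable. -/
theorem rightAdjoint_heavilySeparable_iff_leftAdjoint_heavilySeparable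
    {C : Type u} [Category.{v} C]
    (L : Comonad C) (R : Monad C) (adj : L.toFunctor ⊣ R.toFunctor)
    (hμ : R.μ = conjugateEquiv (adj.comp adj) adj L.δ)
    (hη : R.η = conjugateEquiv (Adjunction.id (C := C)) adj L.ε)
    (P Q : C ⥤ C) (adjPQ : P ⊣ Q)
    (hco : adjPQ.toComonad = L) (hmo : adjPQ.toMonad = R) :
    HeavilySeparable Q ↔ HeavilySeparable P := by
  subst hco hmo
  change (Q ⋙ P) ⊣ (P ⋙ Q) at adj
  change adjPQ.toMonad.μ = conjugateEquiv (adj.comp adj) adj adjPQ.toComonad.δ at hμ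
  change adjPQ.toMonad.η = conjugateEquiv (Adjunction.id (C := C)) adj adjPQ.toComonad.ε at hη
  -- naturality helpers for the adjunction `P ⊣ Q`
  have un : ∀ {x y : C} (f : x ⟶ y),
      adjPQ.unit.app x ≫ Q.map (P.map f) = f ≫ adjPQ.unit.app y := by
    intro x y f
    simpa using (adjPQ.unit.naturality f).symm
  have cn : ∀ {x y : C} (f : x ⟶ y),
      P.map (Q.map f) ≫ adjPQ.counit.app y = adjPQ.counit.app x ≫ f := by
    intro x y f
    simpa using adjPQ.counit.naturality f
  -- the P-side equivalence
  have iffP : HeavilySeparable P ↔ KSep adjPQ.toMonad := by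
    refine heavilySeparable_iff_kSep P adjPQ.toMonad (fun a b => adjPQ.homEquiv a (P.obj b)) ?_ ?_ ?_
    · intro a' a b b' u v h
      show adjPQ.unit.app a' ≫ Q.map (P.map u ≫ h ≫ P.map v)
        = u ≫ (adjPQ.unit.app a ≫ Q.map h) ≫ Q.map (P.map v)
      rw [Q.map_comp, Q.map_comp, ← Category.assoc, un u]
      simp
    · intro a b f
      show adjPQ.unit.app a ≫ Q.map (P.map f) = f ≫ adjPQ.unit.app b
      exact un f
    · intro a b c h h'
      show adjPQ.unit.app a ≫ Q.map (h ≫ h')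
        = (adjPQ.unit.app a ≫ Q.map h)
            ≫ Q.map (P.map (adjPQ.unit.app b ≫ Q.map h'))
            ≫ Q.map (adjPQ.counit.app (P.obj c))
      rw [Q.map_comp, P.map_comp, Q.map_comp]
      have h1 : Q.map (P.map (Q.map h')) ≫ Q.map (adjPQ.counit.app (P.obj c))
          = Q.map (adjPQ.counit.app (P.obj b)) ≫ Q.map h' := by
        rw [← Q.map_comp, cn h', Q.map_comp]
      rw [Category.assoc, Category.assoc, h1]
      slice_rhs 3 4 => rw [← Q.map_comp, adjPQ.left_triangle_components]
      simp
  -- unit fact from hη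
  have factA : ∀ x : C, adjPQ.unit.app x
      = adj.unit.app x ≫ Q.map (P.map (adjPQ.counit.app x)) := by
    intro x
    have h1 := unit_conjugateEquiv (Adjunction.id (C := C)) adj adjPQ.toComonad.ε x
    rw [← hη] at h1
    simpa [Adjunction.id] using h1
  -- multiplication fact from hμ
  have factB0 : ∀ x : C,
      adj.unit.app x ≫ Q.map (P.map (adj.unit.app (P.obj (Q.obj x))))
          ≫ Q.map (adjPQ.counit.app (P.obj (P.obj (Q.obj (P.obj (Q.obj x))))))
      = adj.unit.app x ≫ Q.map (P.map (P.map (adjPQ.unit.app (Q.obj x)))) := by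
    intro x
    have h1 := unit_conjugateEquiv (adj.comp adj) adj adjPQ.toComonad.δ x
    rw [← hμ] at h1
    simpa [Adjunction.toMonad, Adjunction.toComonad] using h1
  have factB0w : ∀ (x : C) {Z : C} (w : Q.obj (P.obj (P.obj (Q.obj (P.obj (Q.obj x))))) ⟶ Z),
      adj.unit.app x ≫ Q.map (P.map (P.map (adjPQ.unit.app (Q.obj x)))) ≫ w
      = adj.unit.app x ≫ Q.map (P.map (adj.unit.app (P.obj (Q.obj x))))
          ≫ Q.map (adjPQ.counit.app (P.obj (P.obj (Q.obj (P.obj (Q.obj x)))))) ≫ w := by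
    intro x Z w
    simpa [Category.assoc] using congrArg (· ≫ w) (factB0 x).symm
  -- the mates transport composition of co-Kleisli maps to Kleisli composition
  have factB : ∀ (a b c : C) (k : P.obj (Q.obj a) ⟶ b) (k' : P.obj (Q.obj b) ⟶ c),
      adj.unit.app a ≫ Q.map (P.map (P.map (adjPQ.unit.app (Q.obj a)) ≫ P.map (Q.map k) ≫ k'))
      = (adj.unit.app a ≫ Q.map (P.map k))
          ≫ Q.map (P.map (adj.unit.app b ≫ Q.map (P.map k')))
          ≫ Q.map (adjPQ.counit.app (P.obj c)) := by
    intro a b c k k'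
    have hm : ∀ {x y : C} (m : x ⟶ y),
        Q.map (P.map (Q.map (P.map m))) ≫ Q.map (adjPQ.counit.app (P.obj y))
        = Q.map (adjPQ.counit.app (P.obj x)) ≫ Q.map (P.map m) := by
      intro x y m
      rw [← Q.map_comp, cn (P.map m), Q.map_comp]
    have hmw : ∀ {x y : C} (m : x ⟶ y) {Z : C} (w : Q.obj (P.obj y) ⟶ Z),
        Q.map (adjPQ.counit.app (P.obj x)) ≫ Q.map (P.map m) ≫ w
        = Q.map (P.map (Q.map (P.map m))) ≫ Q.map (adjPQ.counit.app (P.obj y)) ≫ w := by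
      intro x y m Z w
      rw [← Category.assoc, ← hm m, Category.assoc]
    have hu' : ∀ {x y : C} (m : x ⟶ y),
        adj.unit.app x ≫ Q.map (P.map (P.map (Q.map m))) = m ≫ adj.unit.app y := by
      intro x y m
      simpa using (adj.unit.naturality m).symm
    have hu'w : ∀ {Z : C} (w : Q.obj (P.obj (Q.obj (P.obj (P.obj (Q.obj b))))) ⟶ Z),
        Q.map (P.map (adj.unit.app (P.obj (Q.obj a))))
          ≫ Q.map (P.map (Q.map (P.map (P.map (Q.map k))))) ≫ w
        = Q.map (P.map k) ≫ Q.map (P.map (adj.unit.app b)) ≫ w := by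
      intro Z w
      rw [← Category.assoc, ← Q.map_comp, ← P.map_comp, hu' k, P.map_comp, Q.map_comp,
        Category.assoc]
    simp only [Functor.map_comp, Category.assoc]
    rw [factB0w a, hmw (P.map (Q.map k)), hu'w, ← hm k']
  -- the Q-side equivalence
  have iffQ : HeavilySeparable Q ↔ KSep adjPQ.toMonad := by
    refine heavilySeparable_iff_kSep Q adjPQ.toMonad
      (fun a b => ((adjPQ.homEquiv (Q.obj a) b).symm).trans (adj.homEquiv a b)) ?_ ?_ ?_
    · intro a' a b b' u v h
      show adj.unit.app a' ≫ Q.map (P.map (P.map (Q.map u ≫ h ≫ Q.map v) ≫ adjPQ.counit.app b'))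
        = u ≫ (adj.unit.app a ≫ Q.map (P.map (P.map h ≫ adjPQ.counit.app b))) ≫ Q.map (P.map v)
      have h1 : P.map (Q.map u ≫ h ≫ Q.map v) ≫ adjPQ.counit.app b'
          = P.map (Q.map u) ≫ (P.map h ≫ adjPQ.counit.app b) ≫ v := by
        rw [P.map_comp, P.map_comp]
        simp only [Category.assoc]
        rw [cn v]
      rw [h1]
      have h2 : ∀ {x y : C} (m : x ⟶ y) (w : P.obj (Q.obj y) ⟶ b') ,
          adj.unit.app x ≫ Q.map (P.map (P.map (Q.map m) ≫ w))
          = m ≫ adj.unit.app y ≫ Q.map (P.map w) := by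
        intro x y m w
        have hun2 : adj.unit.app x ≫ Q.map (P.map (P.map (Q.map m))) = m ≫ adj.unit.app y := by
          simpa using (adj.unit.naturality m).symm
        rw [P.map_comp, Q.map_comp, ← Category.assoc, hun2, Category.assoc]
      rw [h2 u ((P.map h ≫ adjPQ.counit.app b) ≫ v)]
      congr 1
      rw [P.map_comp, Q.map_comp]
      simp
    · intro a b f
      show adj.unit.app a ≫ Q.map (P.map (P.map (Q.map f) ≫ adjPQ.counit.app b))
        = f ≫ adjPQ.unit.app b
      rw [cn f, P.map_comp, Q.map_comp, ← Category.assoc, ← factA a]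
      exact un f
    · intro a b c h h'
      show adj.unit.app a ≫ Q.map (P.map (P.map (h ≫ h') ≫ adjPQ.counit.app c))
        = (adj.unit.app a ≫ Q.map (P.map (P.map h ≫ adjPQ.counit.app b)))
            ≫ Q.map (P.map (adj.unit.app b ≫ Q.map (P.map (P.map h' ≫ adjPQ.counit.app c))))
            ≫ Q.map (adjPQ.counit.app (P.obj c))
      have key : P.map (adjPQ.unit.app (Q.obj a))
            ≫ P.map (Q.map (P.map h ≫ adjPQ.counit.app b)) ≫ (P.map h' ≫ adjPQ.counit.app c)
          = P.map (h ≫ h') ≫ adjPQ.counit.app c := by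
        rw [Q.map_comp, P.map_comp]
        slice_lhs 1 2 => rw [← P.map_comp, un h, P.map_comp]
        slice_lhs 2 3 => rw [← P.map_comp, adjPQ.right_triangle_components, P.map_id]
        simp [P.map_comp]
      rw [← key, factB a b c (P.map h ≫ adjPQ.counit.app b) (P.map h' ≫ adjPQ.counit.app c)]
  rw [iffQ, iffP]
end
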